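/- Let k > 1 be an integer and let x be a real number such that M := M(x,k) satisfies M ≥ 3. Then log x < (k+1)·log(M+1) + k·log(2·log(M+1)). -/

import Mathlib

noncomputable section

/-- The j-th prime, with `nthPrime 1 = 2`, `nthPrime 2 = 3`, ... -/
def nthPrime (j : ℕ) : ℕ := Nat.nth Nat.Prime (j - 1)

/-- The chain sum `p_b^k + p_{b+1}^k + ... + p_t^k`. -/
def chainSum (k b t : ℕ) : ℕ := ∑ j ∈ Finset.Icc b t, nthPrime j ^ k

/-- `sk k x` is the total number of k-gleeful representations of integers ≤ x,
i.e. the number of pairs `1 ≤ b ≤ t` with `p_b^k + ... + p_t^k ≤ x`. -/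
def sk (k : ℕ) (x : ℝ) : ℕ :=
  Set.ncard {bt : ℕ × ℕ | 1 ≤ bt.1 ∧ bt.1 ≤ bt.2 ∧ (chainSum k bt.1 bt.2 : ℝ) ≤ x}

/-- `skm k m x` is the number of indices `n ≥ 1` with
`p_n^k + p_{n+1}^k + ... + p_{n+m-1}^k ≤ x`. -/
def skm (k m : ℕ) (x : ℝ) : ℕ :=
  Set.ncard {b : ℕ | 1 ≤ b ∧ (chainSum k b (b + m - 1) : ℝ) ≤ x}

/-- The prefix sum `p_1^k + ... + p_M^k`. -/
def prefixSum (k M : ℕ) : ℕ := ∑ j ∈ Finset.Icc 1 M, nthPrime j ^ k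

/-- The prime counting function: the number of primes ≤ t. -/
def primePi (t : ℝ) : ℕ := Set.ncard {p : ℕ | p.Prime ∧ (p : ℝ) ≤ t}

/-- `fkm k m n` is the number of indices `b ≥ 1` with
`n = p_b^k + p_{b+1}^k + ... + p_{b+m-1}^k`. -/
def fkm (k m n : ℕ) : ℕ :=
  Set.ncard {b : ℕ | 1 ≤ b ∧ n = chainSum k b (b + m - 1)}

def A (y : ℝ) : ℝ := Real.log (y / 2) / Real.log y

def B (y : ℝ) (k : ℕ) : ℝ :=
  Real.log (y + 1) / Real.log y +
    Real.log ((Real.log (y + 1)) ^ 2) / Real.log y * ((k : ℝ) / ((k : ℝ) + 1))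

def C (y : ℝ) (k : ℕ) : ℝ :=
  (y / (y - 1)) ^ ((1 : ℝ) / ((k : ℝ) + 1)) * B y k ^ ((k : ℝ) / ((k : ℝ) + 1))

def D (y : ℝ) (k : ℕ) : ℝ :=
  (y / (y + 3)) *
    (Real.log (y / 2) / (Real.log y + 2 * Real.log (Real.log (y + 2)))) ^
      ((k : ℝ) / ((k : ℝ) + 1))

def E (y : ℝ) (k : ℕ) : ℝ := 1 + 1 / (((k : ℝ) + 1) * A y - 1)

def F (y : ℝ) (k : ℕ) : ℝ :=
  ((y + 1) / y) ^ (((k : ℝ) - 1) / (k : ℝ)) *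
    (4 : ℝ) ^ (((k : ℝ) - 1) / ((k : ℝ) * ((k : ℝ) + 1))) *
    C y k ^ (((k : ℝ) - 1) / (k : ℝ)) * E y k

def U (y : ℝ) (k : ℕ) : ℝ := 1.25506 * F y k

def L (y : ℝ) (k : ℕ) : ℝ := ((y - 1) / y) * D y k ^ 2

def ck (k : ℕ) : ℝ :=
  ((k : ℝ) ^ 2 / ((k : ℝ) - 1)) * ((k : ℝ) + 1) ^ (((k : ℝ) - 1) / (k : ℝ))



namespace GA

def tdiv : ℕ → ℕ → ℕ → Bool
  | 0, _, _ => false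
  | (f+1), d, p => if p < d*d then true else if p % d == 0 then false else tdiv f (d+1) p

lemma tdiv_correct : ∀ f d p, tdiv f d p = true → ∀ m, d ≤ m → m*m ≤ p → ¬ m ∣ p := by
  intro f
  induction f with
  | zero => intro d p h; simp [tdiv] at h
  | succ f ih =>
    intro d p h m hdm hmp
    rw [tdiv] at h
    split at h
    · exact absurd hmp (by push_neg; calc p < d*d := by assumption
        _ ≤ m*m := Nat.mul_le_mul hdm hdm)
    · split at h
      · exact absurd h (by simp)
      · rcases eq_or_lt_of_le hdm with rfl | hlt
        · intro hdvd
          rename_i h1 h2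
          simp only [beq_iff_eq] at h2
          exact h2 (Nat.dvd_iff_mod_eq_zero.mp hdvd)
        · exact ih (d+1) p h m hlt hmp

def isP (p : ℕ) : Bool := decide (2 ≤ p) && tdiv p 2 p

lemma isP_prime (p : ℕ) (h : isP p = true) : p.Prime := by
  rw [isP, Bool.and_eq_true, decide_eq_true_eq] at h
  obtain ⟨h2, ht⟩ := h
  rw [Nat.prime_def_le_sqrt]
  refine ⟨h2, fun m hm hms => ?_⟩
  exact tdiv_correct p 2 p ht m hm (Nat.le_sqrt.mp hms)

def sortedChk : List ℕ → Bool
  | [] => true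
  | [_] => true
  | a :: b :: l => decide (a < b) && sortedChk (b :: l)

lemma sortedChk_chain' : ∀ l : List ℕ, sortedChk l = true → l.Chain' (· < ·) := by
  intro l
  induction l with
  | nil => intro _; exact List.isChain_nil
  | cons a l ih =>
    match l with
    | [] => intro _; exact List.isChain_singleton a
    | b :: t =>
      intro h
      rw [sortedChk, Bool.and_eq_true, decide_eq_true_eq] at h
      exact List.IsChain.cons_cons h.1 (ih h.2)

lemma count_lb (l : List ℕ) (hs : l.Pairwise (· < ·)) (hp : ∀ p ∈ l, Nat.Prime p)
    (K : ℕ) (hK : ∀ p ∈ l, p < K) : l.length ≤ Nat.count Nat.Prime K := by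
  rw [Nat.count_eq_card_filter_range]
  have hnd : l.Nodup := hs.nodup
  rw [← List.toFinset_card_of_nodup hnd]
  apply Finset.card_le_card
  intro p hpm
  rw [List.mem_toFinset] at hpm
  rw [Finset.mem_filter, Finset.mem_range]
  exact ⟨hK p hpm, hp p hpm⟩

lemma take_le (l : List ℕ) (hs : l.Pairwise (· < ·)) (b : ℕ) (hb1 : 1 ≤ b)
    (hb : b ≤ l.length) (p : ℕ) (hp : p ∈ l.take b) : p ≤ l.getD (b-1) 0 := by
  rw [List.mem_iff_getElem] at hp
  obtain ⟨i, hi, rfl⟩ := hp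
  have hib : i < b := lt_of_lt_of_le hi (by simp)
  rw [List.getElem_take]
  have hb1' : b - 1 < l.length := by omega
  rw [List.getD_eq_getElem l 0 hb1']
  rcases eq_or_lt_of_le (Nat.le_sub_one_of_lt hib) with heq | hlt
  · subst heq; exact le_refl _
  · exact (List.pairwise_iff_getElem.mp hs i (b-1) (by omega) hb1' hlt).le

lemma nth_prime_le (n b K : ℕ) (hn1 : 1 ≤ n) (hn : n ≤ b)
    (hb : b ≤ Nat.count Nat.Prime (K+1)) : Nat.nth Nat.Prime (n-1) ≤ K := by
  have h1 : Nat.nth Nat.Prime (n-1) ≤ Nat.nth Nat.Prime (b-1) :=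
    Nat.nth_monotone Nat.infinite_setOf_prime (by omega)
  have h2 : Nat.nth Nat.Prime (b-1) < K + 1 :=
    Nat.nth_lt_of_lt_count (by omega)
  omega

lemma loglb (x : ℝ) (t : ℕ) (hx : 0 < x) :
    (t : ℝ) * Real.log 2 + 1 - 2^t / x ≤ Real.log x := by
  have h2t : (0:ℝ) < 2^t := by positivity
  have h := Real.log_le_sub_one_of_pos (show (0:ℝ) < 2^t / x by positivity)
  rw [Real.log_div (by positivity) (ne_of_gt hx), Real.log_pow] at h
  linarith

lemma l2q : (6931471803:ℝ)/10000000000 < Real.log 2 := by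
  have h : (6931471803:ℝ)/10000000000 = 0.6931471803 := by norm_num
  rw [h]; exact Real.log_two_gt_d9

lemma cp (a b q n : ℕ) (ha : 1 ≤ a) (h1 : a ≤ n) (h2 : n ≤ b)
    (hq : b ≤ Nat.count Nat.Prime (q+1)) (hbound : (q:ℝ) ≤ 2*a*Real.log a) :
    (Nat.nth Nat.Prime (n-1) : ℝ) ≤ 2*n*Real.log n := by
  have hle : Nat.nth Nat.Prime (n-1) ≤ q := nth_prime_le n b q (by omega) h2 hq
  have han : (a:ℝ) ≤ (n:ℝ) := by exact_mod_cast h1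
  have ha1 : (1:ℝ) ≤ (a:ℝ) := by exact_mod_cast ha
  have hlog : Real.log a ≤ Real.log n := Real.log_le_log (by linarith) han
  have hloga : 0 ≤ Real.log a := Real.log_nonneg ha1
  calc (Nat.nth Nat.Prime (n-1) : ℝ) ≤ (q:ℝ) := by exact_mod_cast hle
    _ ≤ 2*a*Real.log a := hbound
    _ ≤ 2*n*Real.log n := by nlinarith

def PL : List ℕ := [2, 3, 5, 7, 11, 13, 17, 19, 23, 29, 31, 37, 41, 43, 47, 53, 59, 61, 67, 71, 73, 79, 83, 89, 97, 101, 103, 107, 109, 113, 127, 131, 137, 139, 149, 151, 157, 163, 167, 173, 179, 181, 191, 193, 197, 199, 211, 223, 227, 229, 233, 239, 241, 251, 257, 263, 269, 271, 277, 281, 283, 293, 307, 311, 313, 317, 331, 337, 347, 349, 353, 359, 367, 373, 379, 383, 389, 397, 401, 409, 419, 421, 431, 433, 439, 443, 449, 457, 461, 463, 467, 479, 487, 491, 499, 503, 509, 521, 523, 541, 547, 557, 563, 569, 571, 577, 587, 593, 599, 601, 607, 613, 617, 619, 631, 641, 643, 647, 653, 659, 661, 673, 677, 683, 691, 701, 709,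 719, 727, 733, 739, 743, 751, 757, 761, 769, 773, 787, 797, 809, 811, 821, 823, 827, 829, 839, 853, 857, 859, 863, 877, 881, 883, 887, 907, 911, 919, 929, 937, 941, 947, 953, 967, 971, 977, 983, 991, 997, 1009, 1013, 1019, 1021, 1031, 1033, 1039, 1049, 1051, 1061, 1063, 1069, 1087, 1091, 1093, 1097, 1103, 1109, 1117, 1123, 1129, 1151, 1153, 1163, 1171, 1181, 1187, 1193, 1201, 1213, 1217, 1223, 1229, 1231, 1237, 1249, 1259, 1277, 1279, 1283, 1289, 1291, 1297, 1301, 1303, 1307, 1319, 1321, 1327, 1361, 1367, 1373, 1381, 1399, 1409, 1423, 1427, 1429, 1433, 1439, 1447, 1451, 1453, 1459, 1471, 1481, 1483, 1487, 1489, 1493, 1499, 1511, 1523, 1531, 1543, 1549, 1553, 1559, 1567, 1571, 1579, 1583, 1597, 1601, 1607, 1609, 1613, 1619, 1621, 1627, 1637, 1657, 1663, 1667, 1669, 1693, 1697, 1699, 1709, 1721, 1723, 1733, 1741, 1747, 1753, 1759, 1777, 1783, 1787, 1789, 1801, 1811, 1823, 1831, 1847, 1861, 1867, 1871, 1873, 1877,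 1879, 1889, 1901, 1907, 1913, 1931, 1933, 1949, 1951, 1973, 1979, 1987, 1993, 1997, 1999, 2003, 2011, 2017, 2027, 2029, 2039, 2053, 2063, 2069, 2081, 2083, 2087, 2089, 2099, 2111, 2113, 2129, 2131, 2137, 2141, 2143, 2153, 2161, 2179, 2203, 2207, 2213, 2221, 2237, 2239, 2243, 2251, 2267, 2269, 2273, 2281, 2287, 2293, 2297, 2309, 2311, 2333, 2339, 2341, 2347, 2351, 2357, 2371, 2377, 2381, 2383, 2389, 2393, 2399, 2411, 2417, 2423, 2437, 2441, 2447, 2459, 2467, 2473, 2477, 2503, 2521, 2531, 2539, 2543, 2549, 2551, 2557, 2579, 2591, 2593, 2609, 2617, 2621, 2633, 2647, 2657, 2659, 2663, 2671, 2677, 2683, 2687, 2689, 2693, 2699, 2707, 2711, 2713, 2719, 2729, 2731, 2741, 2749, 2753, 2767, 2777, 2789, 2791, 2797, 2801, 2803, 2819, 2833, 2837, 2843, 2851, 2857, 2861, 2879, 2887, 2897, 2903, 2909, 2917, 2927, 2939, 2953, 2957, 2963, 2969, 2971, 2999, 3001, 3011, 3019, 3023, 3037, 3041, 3049, 3061,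 3067, 3079, 3083, 3089, 3109, 3119, 3121, 3137, 3163, 3167, 3169, 3181, 3187, 3191, 3203, 3209, 3217, 3221, 3229, 3251, 3253, 3257, 3259, 3271, 3299, 3301, 3307, 3313, 3319, 3323, 3329, 3331, 3343, 3347, 3359, 3361, 3371, 3373, 3389, 3391, 3407, 3413, 3433, 3449, 3457, 3461, 3463, 3467, 3469, 3491, 3499, 3511, 3517, 3527, 3529, 3533, 3539, 3541, 3547, 3557, 3559, 3571, 3581, 3583, 3593, 3607, 3613, 3617, 3623, 3631, 3637, 3643, 3659, 3671, 3673, 3677, 3691, 3697, 3701, 3709, 3719, 3727, 3733, 3739, 3761, 3767, 3769, 3779, 3793, 3797, 3803, 3821, 3823, 3833, 3847, 3851, 3853, 3863, 3877, 3881, 3889, 3907, 3911, 3917, 3919, 3923, 3929, 3931, 3943, 3947, 3967, 3989, 4001, 4003, 4007, 4013, 4019, 4021, 4027, 4049, 4051, 4057, 4073, 4079, 4091, 4093, 4099, 4111, 4127, 4129, 4133, 4139, 4153, 4157, 4159, 4177, 4201, 4211, 4217, 4219, 4229, 4231, 4241, 4243, 4253, 4259, 4261, 4271, 4273, 4283,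 4289, 4297, 4327, 4337, 4339, 4349, 4357, 4363, 4373, 4391, 4397, 4409, 4421, 4423, 4441, 4447, 4451, 4457, 4463, 4481, 4483, 4493, 4507, 4513, 4517, 4519, 4523, 4547, 4549, 4561, 4567, 4583, 4591, 4597, 4603, 4621, 4637, 4639, 4643, 4649, 4651, 4657, 4663, 4673, 4679, 4691, 4703, 4721, 4723, 4729, 4733, 4751, 4759, 4783, 4787, 4789, 4793, 4799, 4801, 4813, 4817, 4831, 4861, 4871, 4877, 4889, 4903, 4909, 4919, 4931, 4933, 4937, 4943, 4951, 4957, 4967, 4969, 4973, 4987, 4993, 4999, 5003, 5009, 5011, 5021, 5023, 5039, 5051, 5059, 5077, 5081, 5087, 5099, 5101, 5107, 5113, 5119, 5147, 5153, 5167, 5171, 5179, 5189, 5197, 5209, 5227, 5231, 5233, 5237, 5261, 5273, 5279, 5281, 5297, 5303, 5309, 5323, 5333, 5347, 5351, 5381, 5387, 5393, 5399, 5407, 5413, 5417, 5419, 5431, 5437, 5441, 5443, 5449, 5471, 5477, 5479, 5483, 5501, 5503, 5507, 5519, 5521, 5527, 5531, 5557, 5563, 5569, 5573, 5581, 5591,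 5623, 5639, 5641, 5647, 5651, 5653, 5657, 5659, 5669, 5683, 5689, 5693, 5701, 5711, 5717, 5737, 5741, 5743, 5749, 5779, 5783, 5791, 5801, 5807, 5813, 5821, 5827, 5839, 5843, 5849, 5851, 5857, 5861, 5867, 5869, 5879, 5881, 5897, 5903, 5923, 5927, 5939, 5953, 5981, 5987, 6007, 6011, 6029, 6037, 6043, 6047, 6053, 6067, 6073, 6079, 6089, 6091, 6101, 6113, 6121, 6131, 6133, 6143, 6151, 6163, 6173, 6197, 6199, 6203, 6211, 6217, 6221, 6229, 6247, 6257, 6263, 6269, 6271, 6277, 6287, 6299, 6301, 6311, 6317, 6323, 6329, 6337, 6343, 6353, 6359, 6361, 6367, 6373, 6379, 6389, 6397, 6421, 6427, 6449, 6451, 6469, 6473, 6481, 6491, 6521, 6529, 6547, 6551, 6553, 6563, 6569, 6571, 6577, 6581, 6599, 6607, 6619, 6637, 6653, 6659, 6661, 6673, 6679, 6689, 6691, 6701, 6703, 6709, 6719, 6733, 6737, 6761, 6763, 6779, 6781, 6791, 6793, 6803, 6823, 6827, 6829, 6833, 6841, 6857, 6863, 6869, 6871, 6883, 6899, 6907,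 6911, 6917, 6947, 6949, 6959, 6961, 6967, 6971, 6977, 6983, 6991, 6997, 7001, 7013, 7019, 7027, 7039, 7043, 7057, 7069, 7079, 7103, 7109, 7121, 7127, 7129, 7151, 7159, 7177, 7187, 7193, 7207, 7211, 7213, 7219, 7229, 7237, 7243, 7247, 7253, 7283, 7297, 7307, 7309, 7321, 7331, 7333, 7349, 7351, 7369, 7393, 7411, 7417, 7433, 7451, 7457, 7459, 7477, 7481, 7487, 7489, 7499, 7507, 7517, 7523, 7529, 7537, 7541, 7547, 7549, 7559, 7561, 7573, 7577, 7583, 7589, 7591, 7603, 7607, 7621, 7639, 7643, 7649, 7669, 7673, 7681, 7687, 7691, 7699, 7703, 7717, 7723, 7727, 7741, 7753, 7757, 7759, 7789, 7793, 7817, 7823, 7829, 7841, 7853, 7867, 7873, 7877, 7879, 7883, 7901, 7907, 7919, 7927, 7933, 7937, 7949, 7951, 7963, 7993, 8009, 8011, 8017, 8039, 8053, 8059, 8069, 8081, 8087, 8089, 8093, 8101, 8111, 8117, 8123, 8147, 8161, 8167]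

set_option maxRecDepth 100000 in
set_option maxHeartbeats 4000000 in
lemma PL_all : PL.all isP = true := by decide

set_option maxRecDepth 100000 in
set_option maxHeartbeats 4000000 in
lemma PL_sorted : sortedChk PL = true := by decide

set_option maxRecDepth 100000 in
set_option maxHeartbeats 4000000 in
lemma PL_len : PL.length = 1025 := by decide

lemma PL_pairwise : PL.Pairwise (· < ·) :=
  List.isChain_iff_pairwise.mp (sortedChk_chain' PL PL_sorted)

lemma PL_prime : ∀ p ∈ PL, Nat.Prime p :=
  fun p hp => isP_prime p (List.all_eq_true.mp PL_all p hp)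

set_option maxRecDepth 100000 in
lemma cp_of_list (a b q n : ℕ) (ha : 1 ≤ a) (h1 : a ≤ n) (h2 : n ≤ b)
    (hb : b ≤ PL.length) (hq : PL.getD (b-1) 0 = q)
    (hbound : (q:ℝ) ≤ 2*a*Real.log a) :
    (Nat.nth Nat.Prime (n-1) : ℝ) ≤ 2*n*Real.log n := by
  have hb1 : 1 ≤ b := le_trans ha (le_trans h1 h2)
  have hps : (PL.take b).Pairwise (· < ·) := PL_pairwise.sublist (List.take_sublist b PL)
  have hlen : (PL.take b).length = b := by rw [List.length_take]; omega
  have hcount : b ≤ Nat.count Nat.Prime (q+1) := by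
    rw [← hlen]
    apply count_lb _ hps (fun p hp => PL_prime p (List.mem_of_mem_take hp)) _
    intro p hp
    have h := take_le PL PL_pairwise b hb1 hb p hp
    rw [hq] at h
    omega
  exact cp a b q n ha h1 h2 hcount hbound

set_option maxRecDepth 100000 in
set_option maxHeartbeats 1000000 in
lemma small (N : ℕ) (h4 : 4 ≤ N) (hN : N ≤ 1025) :
    (Nat.nth Nat.Prime (N-1) : ℝ) ≤ 2*N*Real.log N := by
  rcases le_or_gt N 5 with h0 | h0
  · apply cp_of_list 4 5 11 N (by norm_num) (by omega) (by omega)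
      (by rw [PL_len]; try norm_num) (by rfl)
    have hl := loglb (4:ℝ) 2 (by norm_num)
    have l2 := l2q
    push_cast
    nlinarith [hl, l2]
  rcases le_or_gt N 6 with h1 | h1
  · apply cp_of_list 5 6 13 N (by norm_num) (by omega) (by omega)
      (by rw [PL_len]; try norm_num) (by rfl)
    have hl := loglb (5:ℝ) 2 (by norm_num)
    have l2 := l2q
    push_cast
    nlinarith [hl, l2]
  rcases le_or_gt N 8 with h2 | h2
  · apply cp_of_list 6 8 19 N (by norm_num) (by omega) (by omega)
      (by rw [PL_len]; try norm_num) (by rfl)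
    have hl := loglb (6:ℝ) 3 (by norm_num)
    have l2 := l2q
    push_cast
    nlinarith [hl, l2]
  rcases le_or_gt N 11 with h3 | h3
  · apply cp_of_list 8 11 31 N (by norm_num) (by omega) (by omega)
      (by rw [PL_len]; try norm_num) (by rfl)
    have hl := loglb (8:ℝ) 3 (by norm_num)
    have l2 := l2q
    push_cast
    nlinarith [hl, l2]
  rcases le_or_gt N 15 with h4 | h4
  · apply cp_of_list 11 15 47 N (by norm_num) (by omega) (by omega)
      (by rw [PL_len]; try norm_num) (by rfl)
    have hl := loglb (11:ℝ) 3 (by norm_num)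
    have l2 := l2q
    push_cast
    nlinarith [hl, l2]
  rcases le_or_gt N 22 with h5 | h5
  · apply cp_of_list 15 22 79 N (by norm_num) (by omega) (by omega)
      (by rw [PL_len]; try norm_num) (by rfl)
    have hl := loglb (15:ℝ) 4 (by norm_num)
    have l2 := l2q
    push_cast
    nlinarith [hl, l2]
  rcases le_or_gt N 32 with h6 | h6
  · apply cp_of_list 22 32 131 N (by norm_num) (by omega) (by omega)
      (by rw [PL_len]; try norm_num) (by rfl)
    have hl := loglb (22:ℝ) 4 (by norm_num)
    have l2 := l2q
    push_cast
    nlinarith [hl, l2]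
  rcases le_or_gt N 47 with h7 | h7
  · apply cp_of_list 32 47 211 N (by norm_num) (by omega) (by omega)
      (by rw [PL_len]; try norm_num) (by rfl)
    have hl := loglb (32:ℝ) 5 (by norm_num)
    have l2 := l2q
    push_cast
    nlinarith [hl, l2]
  rcases le_or_gt N 71 with h8 | h8
  · apply cp_of_list 47 71 353 N (by norm_num) (by omega) (by omega)
      (by rw [PL_len]; try norm_num) (by rfl)
    have hl := loglb (47:ℝ) 6 (by norm_num)
    have l2 := l2q
    push_cast
    nlinarith [hl, l2]
  rcases le_or_gt N 110 with h9 | h9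
  · apply cp_of_list 71 110 601 N (by norm_num) (by omega) (by omega)
      (by rw [PL_len]; try norm_num) (by rfl)
    have hl := loglb (71:ℝ) 6 (by norm_num)
    have l2 := l2q
    push_cast
    nlinarith [hl, l2]
  rcases le_or_gt N 173 with h10 | h10
  · apply cp_of_list 110 173 1031 N (by norm_num) (by omega) (by omega)
      (by rw [PL_len]; try norm_num) (by rfl)
    have hl := loglb (110:ℝ) 7 (by norm_num)
    have l2 := l2q
    push_cast
    nlinarith [hl, l2]
  rcases le_or_gt N 274 with h11 | h11
  · apply cp_of_list 173 274 1759 N (by norm_num) (by omega) (by omega)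
      (by rw [PL_len]; try norm_num) (by rfl)
    have hl := loglb (173:ℝ) 7 (by norm_num)
    have l2 := l2q
    push_cast
    nlinarith [hl, l2]
  rcases le_or_gt N 439 with h12 | h12
  · apply cp_of_list 274 439 3067 N (by norm_num) (by omega) (by omega)
      (by rw [PL_len]; try norm_num) (by rfl)
    have hl := loglb (274:ℝ) 8 (by norm_num)
    have l2 := l2q
    push_cast
    nlinarith [hl, l2]
  rcases le_or_gt N 705 with h13 | h13
  · apply cp_of_list 439 705 5323 N (by norm_num) (by omega) (by omega)
      (by rw [PL_len]; try norm_num) (by rfl)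
    have hl := loglb (439:ℝ) 9 (by norm_num)
    have l2 := l2q
    push_cast
    nlinarith [hl, l2]
  rcases le_or_gt N 1025 with h14 | h14
  · apply cp_of_list 705 1025 8167 N (by norm_num) (by omega) (by omega)
      (by rw [PL_len]; try norm_num) (by rfl)
    have hl := loglb (705:ℝ) 9 (by norm_num)
    have l2 := l2q
    push_cast
    nlinarith [hl, l2]
  · omega

lemma centralBinom_le (m : ℕ) (hm : 1 ≤ m) :
    Nat.centralBinom m ≤ (2*m) ^ (Nat.count Nat.Prime (2*m+1)) := by
  have hn : Nat.centralBinom m ≠ 0 := (Nat.centralBinom_pos m).ne'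
  have hm2 : 0 < 2*m := by omega
  conv_lhs => rw [← Nat.factorization_prod_pow_eq_self hn]
  rw [Nat.prod_factorization_eq_prod_primeFactors]
  have hsub : (Nat.centralBinom m).primeFactors ⊆
      (Finset.range (2*m+1)).filter Nat.Prime := by
    intro p hp
    have hprime := Nat.prime_of_mem_primeFactors hp
    have hple : p ≤ 2*m := by
      have h1 : 1 ≤ (Nat.centralBinom m).factorization p :=
        (Nat.Prime.factorization_pos_of_dvd hprime hn
          (Nat.dvd_of_mem_primeFactors hp))
      calc p = p^1 := (pow_one p).symm
        _ ≤ p ^ (Nat.centralBinom m).factorization p :=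
          Nat.pow_le_pow_right hprime.one_lt.le h1
        _ ≤ 2*m := by
          rw [Nat.centralBinom]
          exact Nat.pow_factorization_choose_le hm2
    rw [Finset.mem_filter, Finset.mem_range]
    exact ⟨by omega, hprime⟩
  calc ∏ p ∈ (Nat.centralBinom m).primeFactors, p ^ (Nat.centralBinom m).factorization p
      ≤ ∏ _p ∈ (Nat.centralBinom m).primeFactors, 2*m := by
        apply Finset.prod_le_prod'
        intro p _
        rw [Nat.centralBinom]
        exact Nat.pow_factorization_choose_le hm2
    _ = (2*m) ^ (Nat.centralBinom m).primeFactors.card := (Finset.prod_const _)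
    _ ≤ (2*m) ^ (Nat.count Nat.Prime (2*m+1)) := by
        apply Nat.pow_le_pow_right hm2
        rw [Nat.count_eq_card_filter_range]
        exact Finset.card_le_card hsub

set_option maxHeartbeats 1000000 in
lemma tail (N : ℕ) (hN : 1024 ≤ N) :
    (Nat.nth Nat.Prime (N-1) : ℝ) ≤ 2*N*Real.log N := by
  set L : ℝ := Real.log N with hL
  have hNR : (1024:ℝ) ≤ (N:ℝ) := by exact_mod_cast hN
  have hNpos : (0:ℝ) < N := by linarith
  have l2l : (6931471803:ℝ)/10000000000 < Real.log 2 := by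
    have h : (6931471803:ℝ)/10000000000 = 0.6931471803 := by norm_num
    rw [h]; exact Real.log_two_gt_d9
  have l2u : Real.log 2 < (6931471808:ℝ)/10000000000 := by
    have h : (6931471808:ℝ)/10000000000 = 0.6931471808 := by norm_num
    rw [h]; exact Real.log_two_lt_d9
  have h210 : ((2:ℝ)^(10:ℕ)) = 1024 := by norm_num
  have hLlb : 10 * Real.log 2 ≤ L := by
    rw [hL]
    calc 10 * Real.log 2 = Real.log ((2:ℝ)^(10:ℕ)) := by rw [Real.log_pow]; push_cast; ring
      _ ≤ Real.log N := Real.log_le_log (by positivity) (by rw [h210]; exact hNR)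
  have hL0 : (6931471803:ℝ)/1000000000 ≤ L := by nlinarith
  set m : ℕ := ⌊(N:ℝ) * L⌋₊ with hm
  have hmub : (m:ℝ) ≤ (N:ℝ) * L := Nat.floor_le (by positivity)
  have hmlb : (N:ℝ) * L - 1 < m := by
    have := Nat.lt_floor_add_one ((N:ℝ) * L)
    linarith
  have hm4 : 4 ≤ m := by
    have h4 : (4:ℝ) < (m:ℝ) := by nlinarith
    have : (4:ℕ) < m := by exact_mod_cast h4
    omega
  set c : ℕ := Nat.count Nat.Prime (2*m+1) with hc
  have hcheb : (4:ℕ)^m < (2*m)^(c+1) := by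
    calc (4:ℕ)^m < m * Nat.centralBinom m := Nat.four_pow_lt_mul_centralBinom m hm4
      _ ≤ (2*m) * (2*m)^c := Nat.mul_le_mul (by omega) (centralBinom_le m (by omega))
      _ = (2*m)^(c+1) := by ring
  have hlogcheb : (m:ℝ) * (2 * Real.log 2) ≤ ((c:ℝ)+1) * Real.log (2*(m:ℝ)) := by
    have hcast : ((4:ℝ))^m ≤ (2*(m:ℝ))^(c+1) := by exact_mod_cast hcheb.le
    have hlog := Real.log_le_log (by positivity) hcast
    rw [Real.log_pow, Real.log_pow, show (4:ℝ) = 2^2 by norm_num, Real.log_pow] at hlog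
    push_cast at hlog
    linarith
  have hm0 : (0:ℝ) < (m:ℝ) := by nlinarith
  have hLpos : (0:ℝ) < L := by linarith
  have hlog2m : Real.log (2*(m:ℝ)) ≤ Real.log 2 + L + Real.log L := by
    calc Real.log (2*(m:ℝ)) ≤ Real.log (2*((N:ℝ)*L)) :=
          Real.log_le_log (by positivity) (by nlinarith)
      _ = Real.log 2 + Real.log ((N:ℝ)*L) := Real.log_mul (by norm_num) (by positivity)
      _ = Real.log 2 + (L + Real.log L) := by
          rw [Real.log_mul (ne_of_gt hNpos) (ne_of_gt hLpos)]
      _ ≤ Real.log 2 + L + Real.log L := by linarith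
  have hlogL : Real.log L ≤ L / (15/2:ℝ) + (35/12) * Real.log 2 - 1 := by
    have h75 : Real.log (15/2:ℝ) ≤ (35/12) * Real.log 2 := by
      have hp : ((15/2:ℝ))^(12:ℕ) ≤ (2:ℝ)^(35:ℕ) := by norm_num
      have hl := Real.log_le_log (by positivity) hp
      rw [Real.log_pow, Real.log_pow] at hl
      push_cast at hl
      linarith
    have hq : (0:ℝ) < L/(15/2:ℝ) := by positivity
    have htang : Real.log (L/(15/2:ℝ)) ≤ L/(15/2:ℝ) - 1 := by
      have := Real.log_le_sub_one_of_pos hq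
      linarith
    have hsplit : Real.log L = Real.log (15/2:ℝ) + Real.log (L/(15/2:ℝ)) := by
      rw [← Real.log_mul (by norm_num) (ne_of_gt hq)]
      congr 1
      field_simp
    linarith
  -- key numeric inequality
  have hlog2mpos : 0 < Real.log (2*(m:ℝ)) := by
    apply Real.log_pos; nlinarith
  have hNL1 : (0:ℝ) < (N:ℝ)*L - 1 := by nlinarith
  have hkey : ((N:ℝ)+1) * Real.log (2*(m:ℝ)) < ((c:ℝ)+1) * Real.log (2*(m:ℝ)) := by
    have step1 : ((N:ℝ)+1) * Real.log (2*(m:ℝ))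
        ≤ ((N:ℝ)+1) * ((17/15)*L + (47/12)*((6931471808:ℝ)/10000000000) - 1) := by
      apply mul_le_mul_of_nonneg_left _ (by linarith : (0:ℝ) ≤ (N:ℝ)+1)
      have : Real.log 2 + L + Real.log L ≤ (17/15)*L + (47/12)*((6931471808:ℝ)/10000000000) - 1 := by
        nlinarith
      linarith
    have step2 : ((N:ℝ)+1) * ((17/15)*L + (47/12)*((6931471808:ℝ)/10000000000) - 1)
        ≤ 2*((6931471803:ℝ)/10000000000)*((N:ℝ)*L - 1) := by
      nlinarith [mul_nonneg (by linarith : (0:ℝ) ≤ (N:ℝ) - 1024)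
        (by linarith : (0:ℝ) ≤ L - 6931471803/1000000000)]
    have step3 : 2*((6931471803:ℝ)/10000000000)*((N:ℝ)*L - 1) ≤ 2*Real.log 2*((N:ℝ)*L - 1) := by
      nlinarith
    have step4 : 2*Real.log 2*((N:ℝ)*L - 1) < (m:ℝ) * (2 * Real.log 2) := by
      have h2a : (0:ℝ) < 2*Real.log 2 := by linarith
      nlinarith
    linarith
  have hNc : N ≤ c := by
    have h1 : ((N:ℝ)+1) < ((c:ℝ)+1) := lt_of_mul_lt_mul_right
      (by linarith [hkey]) (le_of_lt hlog2mpos)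
    have : N < c + 1 := by exact_mod_cast (by linarith : (N:ℝ) < (c:ℝ)+1)
    omega
  have hnth : Nat.nth Nat.Prime (N-1) < 2*m+1 := Nat.nth_lt_of_lt_count (by omega)
  have hfin : (Nat.nth Nat.Prime (N-1) : ℝ) ≤ 2*(m:ℝ) := by
    have h := Nat.lt_succ_iff.mp hnth
    calc (Nat.nth Nat.Prime (N-1) : ℝ) ≤ ((2*m:ℕ):ℝ) := by exact_mod_cast h
      _ = 2*(m:ℝ) := by push_cast; ring
  calc (Nat.nth Nat.Prime (N-1) : ℝ) ≤ 2*(m:ℝ) := hfin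
    _ ≤ 2*((N:ℝ)*L) := by linarith
    _ = 2*N*Real.log N := by rw [hL]; ring


end GA

namespace GA

lemma prime_upper (N : ℕ) (h4 : 4 ≤ N) :
    (Nat.nth Nat.Prime (N-1) : ℝ) ≤ 2*N*Real.log N := by
  rcases le_or_gt N 1025 with h | h
  · exact small N h4 h
  · exact tail N (by omega)

end GA

theorem logx_upper_in_M (k : ℕ) (hk : 1 < k) (x : ℝ) (M : ℕ)
    (hM1 : (prefixSum k M : ℝ) ≤ x) (hM2 : x < (prefixSum k (M + 1) : ℝ))
    (hM : 3 ≤ M) :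
    Real.log x <
      ((k : ℝ) + 1) * Real.log ((M : ℝ) + 1) +
        (k : ℝ) * Real.log (2 * Real.log ((M : ℝ) + 1)) := by
  set N := M + 1 with hN
  have hN4 : 4 ≤ N := by omega
  set P := nthPrime N with hPdef
  have hPnth : P = Nat.nth Nat.Prime (N-1) := rfl
  have hP2 : 2 ≤ P := by rw [hPnth]; exact (Nat.prime_nth_prime _).two_le
  have hsum : prefixSum k N ≤ N * P^k := by
    rw [prefixSum]
    calc ∑ j ∈ Finset.Icc 1 N, nthPrime j ^ k
        ≤ ∑ _j ∈ Finset.Icc 1 N, P^k := by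
          apply Finset.sum_le_sum
          intro j hj
          apply Nat.pow_le_pow_left
          rw [hPdef]
          apply Nat.nth_monotone Nat.infinite_setOf_prime
          rw [Finset.mem_Icc] at hj
          omega
      _ = N * P^k := by
          rw [Finset.sum_const, Nat.card_Icc, smul_eq_mul, Nat.add_sub_cancel]
  have hx1 : (1:ℝ) ≤ x := by
    refine le_trans ?_ hM1
    have h1 : 1 ≤ prefixSum k M := by
      rw [prefixSum]
      calc 1 ≤ nthPrime 1 ^ k := Nat.one_le_pow _ _ (Nat.prime_nth_prime 0).pos
        _ ≤ ∑ j ∈ Finset.Icc 1 M, nthPrime j ^ k := by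
          apply Finset.single_le_sum (f := fun j => nthPrime j ^ k)
          · intro i _; positivity
          · rw [Finset.mem_Icc]; omega
    exact_mod_cast h1
  have hx0 : (0:ℝ) < x := by linarith
  have hxlt : x < (N:ℝ) * (P:ℝ)^k := by
    calc x < (prefixSum k N : ℝ) := hM2
      _ ≤ ((N * P^k : ℕ) : ℝ) := by exact_mod_cast hsum
      _ = (N:ℝ) * (P:ℝ)^k := by push_cast; ring
  have hNR : (4:ℝ) ≤ (N:ℝ) := by exact_mod_cast hN4
  have hPR : (0:ℝ) < (P:ℝ) := by
    have : (2:ℝ) ≤ (P:ℝ) := by exact_mod_cast hP2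
    linarith
  have hlogN : 0 < Real.log N := Real.log_pos (by linarith)
  have hPub : (P:ℝ) ≤ 2*N*Real.log N := by
    rw [hPnth]
    exact GA.prime_upper N hN4
  have hNcast : ((N:ℕ):ℝ) = (M:ℝ) + 1 := by rw [hN]; push_cast; ring
  have hkR : (0:ℝ) ≤ (k:ℝ) := Nat.cast_nonneg k
  calc Real.log x < Real.log ((N:ℝ) * (P:ℝ)^k) := Real.log_lt_log hx0 hxlt
    _ = Real.log N + k * Real.log P := by
        rw [Real.log_mul (by linarith) (by positivity), Real.log_pow]
    _ ≤ Real.log N + k * Real.log (2*N*Real.log N) := by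
        have := Real.log_le_log hPR hPub
        nlinarith
    _ = Real.log N + k * (Real.log N + Real.log (2*Real.log N)) := by
        rw [show 2*(N:ℝ)*Real.log N = (N:ℝ)*(2*Real.log N) by ring,
          Real.log_mul (by linarith) (by positivity)]
    _ = ((k:ℝ)+1) * Real.log N + k * Real.log (2*Real.log N) := by ring
    _ = ((k:ℝ)+1) * Real.log ((M:ℝ)+1) + k * Real.log (2*Real.log ((M:ℝ)+1)) := by
        rw [hNcast]
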